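/- For every integer n ≥ 2, the chromatic number of the total cyclic interval graph satisfies χ(CG(n)) ≥ n·H_{⌊(n−1)/2⌋} + (1 − p(n)), where the chromatic number is interpreted as a real number on the left-hand side. -/

import Mathlib

/-- A partition of `{0,…,n-1}` (modeled as `Fin n`) into an unordered pair of nonempty
disjoint subsets covering everything, modeled as a 2-element finset of parts. -/
def TKPart (n : ℕ) (P : Finset (Finset (Fin n))) : Prop :=
  P.card = 2 ∧ (∀ A ∈ P, A.Nonempty) ∧
    (∀ A ∈ P, ∀ B ∈ P, A ≠ B → Disjoint A B) ∧ P.sup id = Finset.univ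

/-- Vertices of the total Kneser graph. -/
abbrev TKVert (n : ℕ) := {P : Finset (Finset (Fin n)) // TKPart n P}

/-- The total Kneser graph `KG(n)`: two distinct partitions are adjacent iff they are
nested, i.e. some part of one is contained in some part of the other. -/
def KG (n : ℕ) : SimpleGraph (TKVert n) where
  Adj P Q := P ≠ Q ∧
    ((∃ A ∈ P.1, ∃ C ∈ Q.1, A ⊆ C) ∨ (∃ C ∈ Q.1, ∃ A ∈ P.1, C ⊆ A))
  symm := ⟨by
    rintro P Q ⟨hne, h⟩
    refine ⟨hne.symm, ?_⟩
    rcases h with ⟨A, hA, C, hC, hAC⟩ | ⟨C, hC, A, hA, hCA⟩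
    · exact Or.inr ⟨A, hA, C, hC, hAC⟩
    · exact Or.inl ⟨C, hC, A, hA, hCA⟩⟩
  loopless := ⟨fun P h => h.1 rfl⟩

/-- `A ⊆ Fin n` is a cyclic interval `{i, i+1, …, i+k-1} (mod n)` with `1 ≤ k ≤ n-1`. -/
def IsCyclicInterval {n : ℕ} (A : Finset (Fin n)) : Prop :=
  ∃ i k : ℕ, 1 ≤ k ∧ k ≤ n - 1 ∧
    (↑A : Set (Fin n)) = {x : Fin n | ∃ j < k, (x : ℕ) = (i + j) % n}

/-- The vertices of the total cyclic interval graph: partitions both of whose parts are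
cyclic intervals. -/
def CGSet (n : ℕ) : Set (TKVert n) := {P | ∀ A ∈ P.1, IsCyclicInterval A}

/-- The total cyclic interval graph `CG(n)`, the induced subgraph of `KG(n)` on partitions
into cyclic intervals. -/
def CG (n : ℕ) : SimpleGraph (CGSet n) := (KG n).induce (CGSet n)


open Finset
open scoped Fin.NatCast Fin.CommRing
variable {n : ℕ}

lemma val_sub [NeZero n] (a b : Fin n) :
    (a - b).val = if b.val ≤ a.val then a.val - b.val else n + a.val - b.val := by
  rw [Fin.sub_def]
  have ha := a.isLt; have hb := b.isLt
  simp only []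
  split_ifs with h
  · have : n - b.val + a.val = (a.val - b.val) + n ∨ (n - b.val + a.val) < n := by omega
    rcases this with h1 | h1
    · rw [h1, Nat.add_mod_right, Nat.mod_eq_of_lt (by omega)]
    · rw [Nat.mod_eq_of_lt h1]; omega
  · rw [Nat.mod_eq_of_lt (by omega)]; omega

def arcI (s e : Fin n) : Finset (Fin n) := Finset.univ.filter (fun x => (x - s).val < (e - s).val)

lemma mem_arcI {s e x : Fin n} : x ∈ arcI s e ↔ (x - s).val < (e - s).val := by
  simp [arcI]

lemma sub_val_pos [NeZero n] {s e : Fin n} (h : s ≠ e) : 0 < (e - s).val := by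
  rcases Nat.eq_zero_or_pos (e - s).val with h0 | h0
  · exact absurd (sub_eq_zero.mp (Fin.ext h0)).symm h
  · exact h0

lemma card_arcI [NeZero n] (s e : Fin n) : (arcI s e).card = (e - s).val := by
  classical
  rw [← Finset.card_range (e - s).val]
  apply Finset.card_bij (fun (x : Fin n) _ => (x - s).val)
  · intro x hx; simpa using (mem_arcI.mp hx)
  · intro x hx y hy hxy
    have : x - s = y - s := Fin.ext hxy
    exact sub_left_inj.mp this
  · intro j hj
    rw [Finset.mem_range] at hj
    have hjn : j < n := lt_of_lt_of_le hj (Nat.le_of_lt_succ (Nat.lt_succ_of_lt (e - s).isLt)) |>.trans_le (le_refl n)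
    refine ⟨s + (j : Fin n), ?_, ?_⟩
    · rw [mem_arcI, add_sub_cancel_left, Fin.val_natCast, Nat.mod_eq_of_lt (lt_of_lt_of_le hj (e-s).isLt.le)]
      exact hj
    · rw [add_sub_cancel_left, Fin.val_natCast, Nat.mod_eq_of_lt (lt_of_lt_of_le hj (e-s).isLt.le)]

lemma mem_arcI_rev [NeZero n] {s e x : Fin n} (h : s ≠ e) : x ∈ arcI e s ↔ x ∉ arcI s e := by
  have hne : s.val ≠ e.val := fun h' => h (Fin.ext h')
  have hx := x.isLt; have hs := s.isLt; have he := e.isLt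
  simp only [mem_arcI, val_sub]
  split_ifs <;> omega

lemma start_mem_arcI [NeZero n] {s e : Fin n} (h : s ≠ e) : s ∈ arcI s e := by
  rw [mem_arcI, sub_self]
  exact sub_val_pos h

lemma start_pred_not_mem [NeZero n] {s e : Fin n} (hn2 : 2 ≤ n) : s - 1 ∉ arcI s e := by
  have h1 : (1 : Fin n).val = 1 := by rw [Fin.val_one']; exact Nat.mod_eq_of_lt hn2
  have : (s - 1 - s) = (0 : Fin n) - 1 := by ring
  rw [mem_arcI, this]
  have h0 : ((0:Fin n)).val = 0 := rfl
  rw [val_sub, h0, h1]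
  have := (e - s).isLt
  simp only [Nat.le_zero, Nat.one_ne_zero, if_false]
  omega

lemma val_sub_one [NeZero n] (hn2 : 2 ≤ n) (t : Fin n) :
    (t - 1).val = if 1 ≤ t.val then t.val - 1 else n + t.val - 1 := by
  have h1 : (1 : Fin n).val = 1 := by rw [Fin.val_one']; exact Nat.mod_eq_of_lt hn2
  rw [val_sub, h1]

lemma eq_start_of_boundary [NeZero n] {s e c : Fin n} (hn2 : 2 ≤ n)
    (hc : c ∈ arcI s e) (hc' : c - 1 ∉ arcI s e) : c = s := by
  by_contra hcs
  have hj : (c - s).val ≠ 0 := fun h0 => hcs (sub_eq_zero.mp (Fin.ext h0))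
  have heq : c - 1 - s = (c - s) - 1 := by ring
  rw [mem_arcI] at hc
  rw [mem_arcI, heq, val_sub_one hn2] at hc'
  split_ifs at hc' <;> omega

lemma eq_end_of_boundary [NeZero n] {s e c : Fin n} (hn2 : 2 ≤ n) (h : s ≠ e)
    (hc : c ∉ arcI s e) (hc' : c - 1 ∈ arcI s e) : c = e := by
  have hk := sub_val_pos h
  have heq : c - 1 - s = (c - s) - 1 := by ring
  rw [mem_arcI] at hc
  rw [mem_arcI, heq, val_sub_one hn2] at hc'
  push_neg at hc
  have hcl := (c - s).isLt
  have : (c - s).val = (e - s).val := by split_ifs at hc' <;> omega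
  have : c - s = e - s := Fin.ext this
  exact sub_left_inj.mp this

lemma arcI_inj [NeZero n] {s e s' e' : Fin n} (hn2 : 2 ≤ n) (h : s ≠ e) (h' : s' ≠ e')
    (heq : arcI s e = arcI s' e') : s = s' ∧ e = e' := by
  have hs : s' = s := by
    apply eq_start_of_boundary hn2 (s := s) (e := e)
    · rw [heq]; exact start_mem_arcI h'
    · rw [heq]; exact start_pred_not_mem hn2
  have hk : (e - s).val = (e' - s').val := by rw [← card_arcI, ← card_arcI, heq]
  rw [hs] at hk
  have : e - s = e' - s := Fin.ext hk
  exact ⟨hs.symm, sub_left_inj.mp this⟩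

def pairV (s e : Fin n) : Finset (Finset (Fin n)) := {arcI s e, arcI e s}

lemma arcI_ne_rev [NeZero n] {s e : Fin n} (h : s ≠ e) : arcI s e ≠ arcI e s := by
  intro hc
  have h1 := start_mem_arcI h
  rw [hc] at h1
  exact (mem_arcI_rev h).mp h1 (start_mem_arcI h)

lemma pairV_comm (s e : Fin n) : pairV s e = pairV e s := Finset.pair_comm _ _

lemma tkpart_pairV [NeZero n] {s e : Fin n} (h : s ≠ e) : TKPart n (pairV s e) := by
  refine ⟨?_, ?_, ?_, ?_⟩
  · rw [pairV, Finset.card_insert_of_notMem (by simp [arcI_ne_rev h]), Finset.card_singleton]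
  · intro A hA
    rw [pairV, Finset.mem_insert, Finset.mem_singleton] at hA
    rcases hA with rfl | rfl
    · exact ⟨s, start_mem_arcI h⟩
    · exact ⟨e, start_mem_arcI h.symm⟩
  · intro A hA B hB hAB
    rw [pairV, Finset.mem_insert, Finset.mem_singleton] at hA hB
    have key : Disjoint (arcI s e) (arcI e s) := by
      rw [Finset.disjoint_left]
      intro x hx hx'
      exact (mem_arcI_rev h).mp hx' hx
    rcases hA with rfl | rfl <;> rcases hB with rfl | rfl
    · exact absurd rfl hAB
    · exact key
    · exact key.symm
    · exact absurd rfl hAB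
  · rw [pairV]
    apply Finset.eq_univ_of_forall
    intro x
    rw [Finset.sup_insert, Finset.sup_singleton, id, id, Finset.sup_eq_union, Finset.mem_union]
    by_cases hx : x ∈ arcI s e
    · exact Or.inl hx
    · exact Or.inr ((mem_arcI_rev h).mpr hx)

lemma isCyclicInterval_arcI [NeZero n] {s e : Fin n} (h : s ≠ e) : IsCyclicInterval (arcI s e) := by
  refine ⟨s.val, (e - s).val, sub_val_pos h, by have := (e - s).isLt; omega, ?_⟩
  ext x
  simp only [Finset.coe_filter, Set.mem_setOf_eq, Finset.mem_coe, mem_arcI]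
  constructor
  · intro hx
    refine ⟨(x - s).val, hx, ?_⟩
    have h2 : s + (x - s) = x := by ring
    conv_lhs => rw [← h2]
    rw [Fin.val_add]
  · rintro ⟨j, hj, hx⟩
    have hjn : j < n := lt_of_lt_of_le hj (e - s).isLt.le
    have : x = s + (j : Fin n) := by
      apply Fin.ext
      rw [Fin.val_add, Fin.val_natCast, Nat.mod_eq_of_lt hjn, hx]
    rw [this, add_sub_cancel_left, Fin.val_natCast, Nat.mod_eq_of_lt hjn]
    exact hj

lemma mem_pairV {s e : Fin n} {A : Finset (Fin n)} :
    A ∈ pairV s e ↔ A = arcI s e ∨ A = arcI e s := by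
  simp [pairV]

def vertV [NeZero n] (s e : Fin n) (h : s ≠ e) : ↥(CGSet n) :=
  ⟨⟨pairV s e, tkpart_pairV h⟩, by
    intro A hA
    rcases mem_pairV.mp hA with rfl | rfl
    · exact isCyclicInterval_arcI h
    · exact isCyclicInterval_arcI h.symm⟩

lemma pairV_eq_cases [NeZero n] {s e s' e' : Fin n} (hn2 : 2 ≤ n) (h : s ≠ e) (h' : s' ≠ e')
    (heq : pairV s e = pairV s' e') : (s = s' ∧ e = e') ∨ (s = e' ∧ e = s') := by
  have hmem : arcI s e ∈ pairV s' e' := by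
    rw [← heq]; exact Finset.mem_insert_self _ _
  rw [mem_pairV] at hmem
  rcases hmem with hm | hm
  · exact Or.inl (arcI_inj hn2 h h' hm)
  · exact Or.inr (arcI_inj hn2 h h'.symm hm)

lemma arcI_subset [NeZero n] {c a b : Fin n} (hab : (a - c).val ≤ (b - c).val) :
    arcI c a ⊆ arcI c b := by
  intro x hx
  rw [mem_arcI] at hx ⊢
  omega

lemma cut_arc_mem [NeZero n] {s e c : Fin n} (h : s ≠ e) (hc : c = s ∨ c = e) :
    ∃ a, c ≠ a ∧ arcI c a ∈ pairV s e := by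
  rcases hc with rfl | rfl
  · exact ⟨e, h, Finset.mem_insert_self _ _⟩
  · exact ⟨s, h.symm, by rw [pairV, Finset.mem_insert, Finset.mem_singleton]; exact Or.inr rfl⟩

lemma nested_of_shared_cut [NeZero n] {s e s' e' c : Fin n} (h : s ≠ e) (h' : s' ≠ e')
    (hc1 : c = s ∨ c = e) (hc2 : c = s' ∨ c = e') :
    (∃ A ∈ pairV s e, ∃ B ∈ pairV s' e', A ⊆ B) ∨ (∃ B ∈ pairV s' e', ∃ A ∈ pairV s e, B ⊆ A) := by
  obtain ⟨a, hca, hma⟩ := cut_arc_mem h hc1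
  obtain ⟨b, hcb, hmb⟩ := cut_arc_mem h' hc2
  rcases le_total (a - c).val (b - c).val with hle | hle
  · exact Or.inl ⟨arcI c a, hma, arcI c b, hmb, arcI_subset hle⟩
  · exact Or.inr ⟨arcI c b, hmb, arcI c a, hma, arcI_subset hle⟩

lemma flip_directed {f : ℕ → Prop} :
    ∀ b a, a ≤ b → f a → ¬ f b → ∃ j, a ≤ j ∧ j < b ∧ f j ∧ ¬ f (j + 1) := by
  intro b
  induction b with
  | zero => exact fun a hab ha hb => absurd (Nat.le_zero.mp hab ▸ ha) hb
  | succ b ih =>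
    intro a hab ha hb
    rcases Nat.eq_or_lt_of_le hab with rfl | hlt
    · exact absurd ha hb
    · by_cases hfb : f b
      · exact ⟨b, by omega, by omega, hfb, hb⟩
      · obtain ⟨j, h1, h2, h3⟩ := ih a (by omega) ha hfb
        exact ⟨j, h1, by omega, h3⟩

lemma flip_exists {f : ℕ → Prop} {ja jb K : ℕ} (hja : ja < K) (hjb : jb < K)
    (hfa : f ja) (hfb : ¬ f jb) :
    ∃ j, j + 1 < K ∧ ((f j ∧ ¬ f (j + 1)) ∨ (¬ f j ∧ f (j + 1))) := by
  rcases le_total ja jb with hle | hle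
  · obtain ⟨j, h1, h2, h3, h4⟩ := flip_directed jb ja hle hfa hfb
    exact ⟨j, by omega, Or.inl ⟨h3, h4⟩⟩
  · obtain ⟨j, h1, h2, h3, h4⟩ := flip_directed (f := fun j => ¬ f j) ja jb hle hfb
      (not_not_intro hfa)
    exact ⟨j, by omega, Or.inr ⟨h3, not_not.mp h4⟩⟩

lemma exists_cut_in [NeZero n] {s e s' e' : Fin n} (hn2 : 2 ≤ n) (hse : s ≠ e) (h' : s' ≠ e')
    (hx : ∃ x ∈ arcI s' e', x ∈ arcI s e) (hy : ∃ y ∈ arcI s' e', y ∉ arcI s e) :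
    ∃ c : Fin n, (c = s ∨ c = e) ∧ c ∈ arcI s' e' ∧ c - 1 ∈ arcI s' e' := by
  obtain ⟨x, hxA, hxC⟩ := hx
  obtain ⟨y, hyA, hyC⟩ := hy
  have hk'n := (e' - s').isLt
  have hcast : ∀ z : Fin n, z ∈ arcI s' e' → s' + (((z - s').val : ℕ) : Fin n) = z := by
    intro z _
    have : (((z - s').val : ℕ) : Fin n) = z - s' := by
      apply Fin.ext
      rw [Fin.val_natCast, Nat.mod_eq_of_lt (z - s').isLt]
    rw [this]; ring
  set f : ℕ → Prop := fun j => (s' + ((j : ℕ) : Fin n)) ∈ arcI s e with hf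
  have hfx : f (x - s').val := by rw [hf]; simpa [hcast x hxA] using hxC
  have hfy : ¬ f (y - s').val := by rw [hf]; simpa [hcast y hyA] using hyC
  have hjx : (x - s').val < (e' - s').val := mem_arcI.mp hxA
  have hjy : (y - s').val < (e' - s').val := mem_arcI.mp hyA
  obtain ⟨j, hj1, hcase⟩ := flip_exists hjx hjy hfx hfy
  refine ⟨s' + ((j + 1 : ℕ) : Fin n), ?_, ?_, ?_⟩
  rotate_left
  · rw [mem_arcI, add_sub_cancel_left, Fin.val_natCast, Nat.mod_eq_of_lt (by omega)]
    exact hj1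
  · have hco : s' + ((j + 1 : ℕ) : Fin n) - 1 = s' + ((j : ℕ) : Fin n) := by
      have : ((j + 1 : ℕ) : Fin n) = ((j : ℕ) : Fin n) + 1 := by push_cast; ring
      rw [this]; ring
    rw [hco, mem_arcI, add_sub_cancel_left, Fin.val_natCast, Nat.mod_eq_of_lt (by omega)]
    omega
  · have hco : s' + ((j + 1 : ℕ) : Fin n) - 1 = s' + ((j : ℕ) : Fin n) := by
      have : ((j + 1 : ℕ) : Fin n) = ((j : ℕ) : Fin n) + 1 := by push_cast; ring
      rw [this]; ring
    rcases hcase with ⟨hfj, hnfj1⟩ | ⟨hnfj, hfj1⟩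
    · right
      apply eq_end_of_boundary hn2 hse hnfj1
      rw [hco]; exact hfj
    · left
      apply eq_start_of_boundary hn2 hfj1
      rw [hco]; exact hnfj

def goodPair (n : ℕ) (x : ℕ × ℕ) : Prop := 1 ≤ x.2 ∧ 2 * x.2 ≤ n ∧ x.1 < n

instance goodPair.dec : DecidablePred (goodPair n) := fun x => by
  unfold goodPair; infer_instance

def sOf (n : ℕ) [NeZero n] (x : ℕ × ℕ) : Fin n := (x.1 : Fin n)
def eOf (n : ℕ) [NeZero n] (x : ℕ × ℕ) : Fin n := (x.1 : Fin n) + (x.2 : Fin n)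



lemma klen [NeZero n] {x : ℕ × ℕ} (hg : goodPair n x) : (eOf n x - sOf n x).val = x.2 := by
  obtain ⟨h1, h2, h3⟩ := hg
  rw [eOf, sOf, add_sub_cancel_left, Fin.val_natCast, Nat.mod_eq_of_lt (by omega)]

lemma sne [NeZero n] {x : ℕ × ℕ} (hg : goodPair n x) : sOf n x ≠ eOf n x := by
  intro h
  have hk := klen hg
  rw [← h, sub_self] at hk
  have h0 : ((0 : Fin n)).val = 0 := rfl
  rw [h0] at hk
  have := hg.1
  omega

lemma zero_ne_one_fin [NeZero n] (hn2 : 2 ≤ n) : (0 : Fin n) ≠ 1 := by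
  intro h
  have := congrArg Fin.val h
  rw [Fin.val_one'] at this
  have h0 : ((0 : Fin n)).val = 0 := rfl
  rw [h0, Nat.mod_eq_of_lt hn2] at this
  omega

noncomputable def vOf [NeZero n] (hn2 : 2 ≤ n) (x : ℕ × ℕ) : ↥(CGSet n) :=
  if h : goodPair n x then vertV (sOf n x) (eOf n x) (sne h) else vertV 0 1 (zero_ne_one_fin hn2)

lemma vOf_parts [NeZero n] (hn2 : 2 ≤ n) {x : ℕ × ℕ} (h : goodPair n x) :
    ((vOf hn2 x).1 : Finset (Finset (Fin n))) = pairV (sOf n x) (eOf n x) := by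
  rw [vOf, dif_pos h]; rfl

lemma val_sOf [NeZero n] {x : ℕ × ℕ} (hg : goodPair n x) : (sOf n x).val = x.1 := by
  rw [sOf, Fin.val_natCast, Nat.mod_eq_of_lt hg.2.2]

lemma val_eOf [NeZero n] {x : ℕ × ℕ} (hg : goodPair n x) :
    (eOf n x).val = (x.1 + x.2) % n := by
  obtain ⟨h1, h2, h3⟩ := hg
  have hx2 : x.2 % n = x.2 := Nat.mod_eq_of_lt (by omega)
  rw [eOf, Fin.val_add, Fin.val_natCast, Fin.val_natCast, Nat.mod_eq_of_lt h3, hx2]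

lemma vOf_inj [NeZero n] (hn2 : 2 ≤ n) {x y : ℕ × ℕ} (hgx : goodPair n x) (hgy : goodPair n y)
    (hhx : 2 * x.2 = n → x.1 < n / 2) (hhy : 2 * y.2 = n → y.1 < n / 2)
    (heq : vOf hn2 x = vOf hn2 y) : x = y := by
  have hpair : pairV (sOf n x) (eOf n x) = pairV (sOf n y) (eOf n y) := by
    rw [← vOf_parts hn2 hgx, ← vOf_parts hn2 hgy, heq]
  rcases pairV_eq_cases hn2 (sne hgx) (sne hgy) hpair with ⟨hs, he⟩ | ⟨hs, he⟩
  · have h1 : x.1 = y.1 := by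
      have := congrArg Fin.val hs
      rwa [val_sOf hgx, val_sOf hgy] at this
    have h2 : x.2 = y.2 := by
      have : eOf n x - sOf n x = eOf n y - sOf n y := by rw [hs, he]
      have := congrArg Fin.val this
      rwa [klen hgx, klen hgy] at this
    exact Prod.ext h1 h2
  · -- complementary case: x.2 + y.2 = n
    exfalso
    have hsum : x.2 + y.2 = n := by
      have hzero : (eOf n x - sOf n x) + (eOf n y - sOf n y) = 0 := by
        rw [hs, he]; ring
      have := congrArg Fin.val hzero
      rw [Fin.val_add, klen hgx, klen hgy] at this
      have h0 : ((0 : Fin n)).val = 0 := rfl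
      rw [h0] at this
      obtain ⟨hx1, hx2, hx3⟩ := hgx
      obtain ⟨hy1, hy2, hy3⟩ := hgy
      rcases Nat.lt_or_ge (x.2 + y.2) n with hlt | hge
      · rw [Nat.mod_eq_of_lt hlt] at this; omega
      · have hlt2 : (x.2 + y.2) - n < n := by omega
        rw [Nat.mod_eq_sub_mod hge, Nat.mod_eq_of_lt hlt2] at this
        omega
    obtain ⟨hx1, hx2, hx3⟩ := hgx
    obtain ⟨hy1, hy2, hy3⟩ := hgy
    have hx2n : 2 * x.2 = n := by omega
    have hy2n : 2 * y.2 = n := by omega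
    have hhx' := hhx hx2n
    have hhy' := hhy hy2n
    -- sOf n x = eOf n y gives x.1 = (y.1 + y.2) % n = y.1 + y.2
    have := congrArg Fin.val hs
    rw [val_sOf ⟨hx1, hx2, hx3⟩, val_eOf ⟨hy1, hy2, hy3⟩] at this
    rw [Nat.mod_eq_of_lt (by omega)] at this
    omega

lemma CG_adj_iff {u v : ↥(CGSet n)} : (CG n).Adj u v ↔ (KG n).Adj u.1 v.1 := Iff.rfl

lemma class_bound [NeZero n] (hn2 : 2 ≤ n) {a : ℕ} (C : (CG n).Coloring (Fin a))
    {S : Finset (ℕ × ℕ)} (hS : ∀ z ∈ S, goodPair n z)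
    (hmono : ∀ z ∈ S, ∀ w ∈ S, C (vOf hn2 z) = C (vOf hn2 w))
    (hinj : ∀ z ∈ S, ∀ w ∈ S, vOf hn2 z = vOf hn2 w → z = w)
    {x : ℕ × ℕ} (hx : x ∈ S) : S.card ≤ x.2 := by
  classical
  have hgx := hS x hx
  set s := sOf n x with hs
  set e := eOf n x with he
  set A := arcI s e with hA
  have hcardA : A.card = x.2 := by rw [hA, card_arcI, klen hgx]
  set P : (ℕ × ℕ) → Fin n → Prop :=
    fun z c => (c = sOf n z ∨ c = eOf n z) ∧ c ∈ A ∧ c - 1 ∈ A with hP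
  set f : ℕ × ℕ → Fin n := fun z => if h : ∃ c, P z c then h.choose else 0 with hfdef
  -- every z in S.erase x admits a cut inside A
  have key1 : ∀ z ∈ S.erase x, P z (f z) := by
    intro z hz
    obtain ⟨hzx, hzS⟩ := Finset.mem_erase.mp hz
    have hgz := hS z hzS
    have hvne : vOf hn2 z ≠ vOf hn2 x := fun h => hzx (hinj z hzS x hx h)
    have hnadj : ¬ (CG n).Adj (vOf hn2 z) (vOf hn2 x) := fun hadj =>
      (C.valid hadj) (hmono z hzS x hx)
    have hne1 : (vOf hn2 z).1 ≠ (vOf hn2 x).1 := fun h => hvne (Subtype.ext h)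
    have hnor : ¬ ((∃ B ∈ ((vOf hn2 z).1).1, ∃ D ∈ ((vOf hn2 x).1).1, B ⊆ D) ∨
        (∃ D ∈ ((vOf hn2 x).1).1, ∃ B ∈ ((vOf hn2 z).1).1, D ⊆ B)) := by
      intro hor
      exact hnadj (CG_adj_iff.mpr ⟨hne1, hor⟩)
    rw [vOf_parts hn2 hgz, vOf_parts hn2 hgx] at hnor
    have hAmem : A ∈ pairV s e := by rw [mem_pairV]; exact Or.inl rfl
    have hex1 : ∃ pt ∈ A, pt ∈ arcI (sOf n z) (eOf n z) := by
      by_contra hcon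
      push_neg at hcon
      have hsub : A ⊆ arcI (eOf n z) (sOf n z) := fun pt hpt =>
        (mem_arcI_rev (sne hgz)).mpr (hcon pt hpt)
      exact hnor (Or.inr ⟨A, hAmem, arcI (eOf n z) (sOf n z),
        (by rw [mem_pairV]; exact Or.inr rfl), hsub⟩)
    have hex2 : ∃ pt ∈ A, pt ∉ arcI (sOf n z) (eOf n z) := by
      by_contra hcon
      push_neg at hcon
      exact hnor (Or.inr ⟨A, hAmem, arcI (sOf n z) (eOf n z),
        (by rw [mem_pairV]; exact Or.inl rfl), hcon⟩)
    have hexc := exists_cut_in hn2 (sne hgz) (sne hgx) hex1 hex2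
    have hex : ∃ c, P z c := hexc
    rw [hfdef]
    simp only [dif_pos hex]
    exact hex.choose_spec
  -- f maps into A.erase s and is injective there
  have hmaps : ∀ z ∈ S.erase x, f z ∈ A.erase s := by
    intro z hz
    obtain ⟨-, h1, h2⟩ := key1 z hz
    rw [Finset.mem_erase]
    refine ⟨?_, h1⟩
    intro hc
    rw [hc] at h2
    exact start_pred_not_mem hn2 h2
  have hinjf : Set.InjOn f ↑(S.erase x) := by
    intro z hz w hw hfz
    by_contra hzw
    obtain ⟨hcz, -, -⟩ := key1 z hz
    obtain ⟨hcw, -, -⟩ := key1 w hw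
    rw [hfz] at hcz
    have hzS := (Finset.mem_erase.mp hz).2
    have hwS := (Finset.mem_erase.mp hw).2
    have hgz := hS z hzS
    have hgw := hS w hwS
    have hvne : vOf hn2 z ≠ vOf hn2 w := fun h => hzw (hinj z hzS w hwS h)
    have hnested := nested_of_shared_cut (sne hgz) (sne hgw) hcz hcw
    have hadj : (CG n).Adj (vOf hn2 z) (vOf hn2 w) := by
      rw [CG_adj_iff]
      refine ⟨fun h => hvne (Subtype.ext h), ?_⟩
      rw [vOf_parts hn2 hgz, vOf_parts hn2 hgw]
      exact hnested
    exact C.valid hadj (hmono z hzS w hwS)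
  have hle : (S.erase x).card ≤ (A.erase s).card :=
    Finset.card_le_card_of_injOn f hmaps hinjf
  have hsmem : s ∈ A := start_mem_arcI (sne hgx)
  have h1 : (A.erase s).card = A.card - 1 := Finset.card_erase_of_mem hsmem
  have h2 : (S.erase x).card + 1 = S.card := Finset.card_erase_add_one hx
  have := hgx.1
  omega

lemma sum_class {S : Finset (ℕ × ℕ)} (hpos : ∀ x ∈ S, 1 ≤ x.2)
    (hcard : ∀ x ∈ S, S.card ≤ x.2) : ∑ x ∈ S, ((x.2 : ℝ))⁻¹ ≤ 1 := by
  rcases S.eq_empty_or_nonempty with rfl | hne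
  · simp
  · have hc0 : 0 < S.card := Finset.card_pos.mpr hne
    have : ∑ x ∈ S, ((x.2 : ℝ))⁻¹ ≤ ∑ _x ∈ S, ((S.card : ℝ))⁻¹ := by
      apply Finset.sum_le_sum
      intro x hx
      apply inv_anti₀
      · exact_mod_cast hc0
      · exact_mod_cast hcard x hx
    refine le_trans this ?_
    rw [Finset.sum_const, nsmul_eq_mul]
    rw [mul_inv_cancel₀ (by exact_mod_cast hc0.ne')]

lemma harmonic_cast_sum (m : ℕ) : ((harmonic m : ℚ) : ℝ) = ∑ k ∈ Finset.Icc 1 m, ((k : ℝ))⁻¹ := by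
  rw [harmonic_eq_sum_Icc]
  push_cast
  rfl

/-- `χ(CG(n)) ≥ n·H_{⌊(n-1)/2⌋} + (1 - p(n))`, where `H_m` is the `m`-th harmonic number
and `p(n)` is the residue of `n` mod 2, the chromatic number being read as a real number. -/
theorem chromatic_CG_lower (n : ℕ) (hn : 2 ≤ n) :
    ∃ a : ℕ, (CG n).chromaticNumber = a ∧
      (n : ℝ) * ((harmonic ((n - 1) / 2) : ℚ) : ℝ) + (1 - ((n % 2 : ℕ) : ℝ)) ≤ (a : ℝ) := by
  classical
  haveI : NeZero n := ⟨by omega⟩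
  haveI : Finite ↥(CGSet n) := Subtype.finite
  letI : Fintype ↥(CGSet n) := Fintype.ofFinite _
  have hcol0 := SimpleGraph.colorable_of_fintype (CG n)
  set a := (CG n).chromaticNumber.toNat with ha
  have hchrom_le := hcol0.chromaticNumber_le
  have hne_top : (CG n).chromaticNumber ≠ ⊤ :=
    (lt_of_le_of_lt hchrom_le (WithTop.coe_lt_top _)).ne
  have heq : (CG n).chromaticNumber = (a : ℕ∞) := (ENat.coe_toNat hne_top).symm
  refine ⟨a, heq, ?_⟩
  obtain ⟨C⟩ := SimpleGraph.colorable_chromaticNumber hcol0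
  set m := (n - 1) / 2 with hm
  set T1 : Finset (ℕ × ℕ) := Finset.range n ×ˢ Finset.Icc 1 m with hT1
  set T2 : Finset (ℕ × ℕ) :=
    if n % 2 = 0 then Finset.range (n / 2) ×ˢ ({n / 2} : Finset ℕ) else ∅ with hT2
  set T := T1 ∪ T2 with hT
  have hmemT : ∀ x ∈ T, goodPair n x ∧ (2 * x.2 = n → x.1 < n / 2) := by
    intro x hx
    rw [hT, Finset.mem_union] at hx
    rcases hx with hx | hx
    · rw [hT1, Finset.mem_product, Finset.mem_range, Finset.mem_Icc] at hx
      have hx2 : 2 * x.2 ≤ n - 1 := by omega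
      exact ⟨⟨hx.2.1, by omega, hx.1⟩, by omega⟩
    · rw [hT2] at hx
      split_ifs at hx with hpar
      · rw [Finset.mem_product, Finset.mem_range, Finset.mem_singleton] at hx
        refine ⟨⟨by omega, by omega, by omega⟩, fun _ => by omega⟩
      · exact absurd hx (Finset.notMem_empty x)
  have key : ∑ x ∈ T, ((x.2 : ℝ))⁻¹ ≤ (a : ℝ) := by
    have hfib := Finset.sum_fiberwise_of_maps_to (s := T) (t := (Finset.univ : Finset (Fin a)))
      (g := fun x => C (vOf hn x)) (fun x _ => Finset.mem_univ _) (fun x => ((x.2 : ℝ))⁻¹)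
    rw [← hfib]
    have hbound : ∀ j : Fin a,
        ∑ x ∈ T.filter (fun x => C (vOf hn x) = j), ((x.2 : ℝ))⁻¹ ≤ 1 := by
      intro j
      apply sum_class
      · intro x hx
        exact ((hmemT x (Finset.mem_of_mem_filter x hx)).1).1
      · intro x hx
        apply class_bound hn C
        · intro z hz; exact (hmemT z (Finset.mem_of_mem_filter z hz)).1
        · intro z hz w hw
          rw [(Finset.mem_filter.mp hz).2, (Finset.mem_filter.mp hw).2]
        · intro z hz w hw hzw
          have hz' := hmemT z (Finset.mem_of_mem_filter z hz)
          have hw' := hmemT w (Finset.mem_of_mem_filter w hw)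
          exact vOf_inj hn hz'.1 hw'.1 hz'.2 hw'.2 hzw
        · exact hx
    calc ∑ j : Fin a, ∑ x ∈ T.filter (fun x => C (vOf hn x) = j), ((x.2 : ℝ))⁻¹
        ≤ ∑ _j : Fin a, (1 : ℝ) := Finset.sum_le_sum (fun j _ => hbound j)
      _ = (a : ℝ) := by rw [Finset.sum_const, Finset.card_univ, Fintype.card_fin,
            nsmul_eq_mul, mul_one]
  have hdisj : Disjoint T1 T2 := by
    rw [Finset.disjoint_left]
    intro x h1 h2
    rw [hT1, Finset.mem_product, Finset.mem_range, Finset.mem_Icc] at h1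
    rw [hT2] at h2
    split_ifs at h2 with hpar
    · rw [Finset.mem_product, Finset.mem_singleton] at h2
      omega
    · exact Finset.notMem_empty x h2
  have hsum1 : ∑ x ∈ T1, ((x.2 : ℝ))⁻¹ = (n : ℝ) * ((harmonic m : ℚ) : ℝ) := by
    rw [hT1, Finset.sum_product]
    show (∑ _x ∈ Finset.range n, ∑ y ∈ Finset.Icc 1 m, ((y : ℝ))⁻¹) = _
    rw [harmonic_cast_sum, Finset.sum_const, Finset.card_range, nsmul_eq_mul]
  have hsum2 : ∑ x ∈ T2, ((x.2 : ℝ))⁻¹ = 1 - ((n % 2 : ℕ) : ℝ) := by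
    rw [hT2]
    split_ifs with hpar
    · rw [Finset.sum_product]
      show (∑ _x ∈ Finset.range (n / 2), ∑ y ∈ ({n / 2} : Finset ℕ), ((y : ℝ))⁻¹) = _
      rw [Finset.sum_singleton, Finset.sum_const, Finset.card_range, nsmul_eq_mul, hpar]
      have h2 : (1 : ℕ) ≤ n / 2 := by omega
      push_cast
      rw [mul_inv_cancel₀ (by exact_mod_cast (by omega : (n / 2 : ℕ) ≠ 0))]
      norm_num
    · have h1 : n % 2 = 1 := by omega
      rw [h1, Finset.sum_empty]
      norm_num
  have htot : ∑ x ∈ T, ((x.2 : ℝ))⁻¹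
      = (n : ℝ) * ((harmonic m : ℚ) : ℝ) + (1 - ((n % 2 : ℕ) : ℝ)) := by
    rw [hT, Finset.sum_union hdisj, hsum1, hsum2]
  rw [hm] at htot
  linarith [key, htot.symm.le]
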